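/- For every dimension d ≥ 1 and every λ ∈ [0,1], the matrix C_d(λ) = (1−λ)·I_d + λ·W_d on the ray connecting the identity matrix with the flat matrix is a factorisable bistochastic matrix. -/

import Mathlib

/-- A `d × d` real matrix is bistochastic (doubly stochastic) if all its entries are
non-negative and each row and each column sums to `1`. -/
def Bistochastic {d : ℕ} (B : Matrix (Fin d) (Fin d) ℝ) : Prop :=
  (∀ j k, 0 ≤ B j k) ∧ (∀ j, ∑ k, B j k = 1) ∧ (∀ k, ∑ j, B j k = 1)

/-- A bistochastic matrix is bracelet if for every pair of columns `k, l` and every `j₀`,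
`2 √(B j₀ k * B j₀ l) ≤ ∑ j, √(B j k * B j l)` (equivalently, twice the maximum is at most
the sum), and the analogous condition holds for every pair of rows. -/
def Bracelet {d : ℕ} (B : Matrix (Fin d) (Fin d) ℝ) : Prop :=
  Bistochastic B ∧
  (∀ k l j₀ : Fin d, 2 * Real.sqrt (B j₀ k * B j₀ l) ≤ ∑ j, Real.sqrt (B j k * B j l)) ∧
  (∀ j k l₀ : Fin d, 2 * Real.sqrt (B j l₀ * B k l₀) ≤ ∑ l, Real.sqrt (B j l * B k l))

/-- A `d × d` bistochastic matrix `E` is elementary if `E k k = 1` for at least `d - 2`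
indices `k`. -/
def Elementary {d : ℕ} (E : Matrix (Fin d) (Fin d) ℝ) : Prop :=
  Bistochastic E ∧ ∃ S : Finset (Fin d), d - 2 ≤ S.card ∧ ∀ k ∈ S, E k k = 1

/-- The set `F_d` of factorisable bistochastic matrices: the topological closure of the set
of finite products of elementary bistochastic matrices (the identity being the empty
product). -/
def Factorisable {d : ℕ} (B : Matrix (Fin d) (Fin d) ℝ) : Prop :=
  B ∈ closure { M : Matrix (Fin d) (Fin d) ℝ |
    ∃ L : List (Matrix (Fin d) (Fin d) ℝ), (∀ E ∈ L, Elementary E) ∧ M = L.prod }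

/-- The flat (van der Waerden) matrix `W_d` with all entries equal to `1/d`. -/
noncomputable def flatMatrix (d : ℕ) : Matrix (Fin d) (Fin d) ℝ := Matrix.of fun _ _ => (1 : ℝ) / d

namespace RayFact

open Finset

variable {d : ℕ}

abbrev Mat (d : ℕ) := Matrix (Fin d) (Fin d) ℝ

/-- entrywise L¹ norm -/
noncomputable def en (M : Mat d) : ℝ := ∑ i, ∑ j, |M i j|

lemma en_nonneg (M : Mat d) : 0 ≤ en M :=
  Finset.sum_nonneg fun _ _ => Finset.sum_nonneg fun _ _ => abs_nonneg _

lemma abs_entry_le_en (M : Mat d) (a b : Fin d) : |M a b| ≤ en M := by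
  have h1 : |M a b| ≤ ∑ j, |M a j| :=
    Finset.single_le_sum (f := fun j => |M a j|) (fun _ _ => abs_nonneg _) (mem_univ b)
  refine h1.trans ?_
  exact Finset.single_le_sum (f := fun i => ∑ j, |M i j|)
    (fun _ _ => Finset.sum_nonneg fun _ _ => abs_nonneg _) (mem_univ a)

lemma en_add_le (M N : Mat d) : en (M + N) ≤ en M + en N := by
  unfold en
  rw [← Finset.sum_add_distrib]
  refine Finset.sum_le_sum fun i _ => ?_
  rw [← Finset.sum_add_distrib]
  exact Finset.sum_le_sum fun j _ => abs_add_le _ _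

lemma en_smul (c : ℝ) (M : Mat d) : en (c • M) = |c| * en M := by
  unfold en
  simp [Matrix.smul_apply, abs_mul, Finset.mul_sum]

lemma en_one : en (1 : Mat d) = d := by
  simp [en, Matrix.one_apply, apply_ite abs, Finset.sum_ite_eq]

lemma en_mul_le (M N : Mat d) : en (M * N) ≤ en M * en N := by
  unfold en
  calc ∑ i, ∑ j, |(M * N) i j| ≤ ∑ i, ∑ j, ∑ a, |M i a| * |N a j| := by
        refine Finset.sum_le_sum fun i _ => Finset.sum_le_sum fun j _ => ?_
        rw [Matrix.mul_apply]
        refine (Finset.abs_sum_le_sum_abs _ _).trans ?_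
        exact le_of_eq (Finset.sum_congr rfl fun a _ => abs_mul _ _)
    _ = ∑ i, ∑ a, |M i a| * ∑ j, |N a j| := by
        refine Finset.sum_congr rfl fun i _ => ?_
        rw [Finset.sum_comm]
        exact Finset.sum_congr rfl fun a _ => (Finset.mul_sum _ _ _).symm
    _ ≤ ∑ i, ∑ a, |M i a| * en N := by
        refine Finset.sum_le_sum fun i _ => Finset.sum_le_sum fun a _ => ?_
        refine mul_le_mul_of_nonneg_left ?_ (abs_nonneg _)
        refine Finset.single_le_sum (f := fun a' => ∑ j, |N a' j|)
          (fun _ _ => Finset.sum_nonneg fun _ _ => abs_nonneg _) (mem_univ a)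
    _ = en M * en N := by
        unfold en
        rw [Finset.sum_mul]
        exact Finset.sum_congr rfl fun i _ => (Finset.sum_mul _ _ _).symm

end RayFact
section C2
open Finset
variable {d : ℕ}
namespace RayFact

lemma bi_one : Bistochastic (1 : Mat d) := by
  refine ⟨fun j k => ?_, fun j => ?_, fun k => ?_⟩
  · simp [Matrix.one_apply]; split_ifs <;> norm_num
  · simp [Matrix.one_apply, Finset.sum_ite_eq]
  · simp [Matrix.one_apply, Finset.sum_ite_eq']

lemma bi_mul {P Q : Mat d} (hP : Bistochastic P) (hQ : Bistochastic Q) :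
    Bistochastic (P * Q) := by
  obtain ⟨hP0, hPr, hPc⟩ := hP
  obtain ⟨hQ0, hQr, hQc⟩ := hQ
  refine ⟨fun j k => ?_, fun j => ?_, fun k => ?_⟩
  · rw [Matrix.mul_apply]
    exact Finset.sum_nonneg fun a _ => mul_nonneg (hP0 _ _) (hQ0 _ _)
  · simp only [Matrix.mul_apply]
    rw [Finset.sum_comm]
    calc ∑ a, ∑ k, P j a * Q a k = ∑ a, P j a * ∑ k, Q a k := by
          exact Finset.sum_congr rfl fun a _ => (Finset.mul_sum _ _ _).symm
      _ = ∑ a, P j a := by simp [hQr]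
      _ = 1 := hPr j
  · simp only [Matrix.mul_apply]
    rw [Finset.sum_comm]
    calc ∑ a, ∑ j, P j a * Q a k = ∑ a, (∑ j, P j a) * Q a k := by
          exact Finset.sum_congr rfl fun a _ => (Finset.sum_mul _ _ _).symm
      _ = ∑ a, Q a k := by simp [hPc]
      _ = 1 := hQc k

lemma bi_pow {P : Mat d} (hP : Bistochastic P) (n : ℕ) : Bistochastic (P ^ n) := by
  induction n with
  | zero => simpa using bi_one
  | succ n ih => rw [pow_succ]; exact bi_mul ih hP

lemma bi_list_prod {l : List (Mat d)} (h : ∀ M ∈ l, Bistochastic M) :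
    Bistochastic l.prod := by
  induction l with
  | nil => simpa using bi_one
  | cons X l ih =>
      rw [List.prod_cons]
      exact bi_mul (h X List.mem_cons_self) (ih fun M hM => h M (List.mem_cons_of_mem X hM))

lemma en_bi_mul_left {P : Mat d} (hP : Bistochastic P) (X : Mat d) :
    en (P * X) ≤ en X := by
  obtain ⟨hP0, hPr, hPc⟩ := hP
  unfold en
  calc ∑ i, ∑ j, |(P * X) i j| ≤ ∑ i, ∑ j, ∑ a, P i a * |X a j| := by
        refine Finset.sum_le_sum fun i _ => Finset.sum_le_sum fun j _ => ?_
        rw [Matrix.mul_apply]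
        refine (Finset.abs_sum_le_sum_abs _ _).trans (le_of_eq ?_)
        exact Finset.sum_congr rfl fun a _ => by
          rw [abs_mul, abs_of_nonneg (hP0 i a)]
    _ = ∑ j, ∑ a, (∑ i, P i a) * |X a j| := by
        rw [Finset.sum_comm]
        refine Finset.sum_congr rfl fun j _ => ?_
        rw [Finset.sum_comm]
        exact Finset.sum_congr rfl fun a _ => (Finset.sum_mul _ _ _).symm
    _ = ∑ j, ∑ a, |X a j| := by simp [hPc]
    _ = ∑ a, ∑ j, |X a j| := Finset.sum_comm

lemma en_bi_mul_right {Q : Mat d} (hQ : Bistochastic Q) (X : Mat d) :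
    en (X * Q) ≤ en X := by
  obtain ⟨hQ0, hQr, hQc⟩ := hQ
  unfold en
  calc ∑ i, ∑ j, |(X * Q) i j| ≤ ∑ i, ∑ j, ∑ a, |X i a| * Q a j := by
        refine Finset.sum_le_sum fun i _ => Finset.sum_le_sum fun j _ => ?_
        rw [Matrix.mul_apply]
        refine (Finset.abs_sum_le_sum_abs _ _).trans (le_of_eq ?_)
        exact Finset.sum_congr rfl fun a _ => by
          rw [abs_mul, abs_of_nonneg (hQ0 a j)]
    _ = ∑ i, ∑ a, |X i a| * ∑ j, Q a j := by
        refine Finset.sum_congr rfl fun i _ => ?_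
        rw [Finset.sum_comm]
        exact Finset.sum_congr rfl fun a _ => (Finset.mul_sum _ _ _).symm
    _ = ∑ i, ∑ a, |X i a| := by simp [hQr]

lemma en_pow_sub_pow {E C : Mat d} (hE : Bistochastic E) (hC : Bistochastic C) (n : ℕ) :
    en (E ^ n - C ^ n) ≤ n * en (E - C) := by
  induction n with
  | zero => simp [en]
  | succ n ih =>
      have key : E ^ (n+1) - C ^ (n+1) = E * (E ^ n - C ^ n) + (E - C) * C ^ n := by
        rw [pow_succ', pow_succ']; noncomm_ring
      rw [key]
      calc en (E * (E ^ n - C ^ n) + (E - C) * C ^ n)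
          ≤ en (E * (E ^ n - C ^ n)) + en ((E - C) * C ^ n) := en_add_le _ _
        _ ≤ en (E ^ n - C ^ n) + en (E - C) := by
            have h1 := en_bi_mul_left hE (E ^ n - C ^ n)
            have h2 := en_bi_mul_right (bi_pow hC n) (E - C)
            linarith
        _ ≤ n * en (E - C) + en (E - C) := by linarith
        _ = (n + 1 : ℕ) * en (E - C) := by push_cast; ring

end RayFact
end C2
section C3
open Finset
namespace RayFact
variable {d : ℕ}

noncomputable def Nm (j k : Fin d) : Mat d := Matrix.of fun a b =>
  if a = j ∧ b = j then -(1/2 : ℝ)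
  else if a = j ∧ b = k then 1/2
  else if a = k ∧ b = j then 1/2
  else if a = k ∧ b = k then -(1/2)
  else 0

noncomputable def Tm (j k : Fin d) (μ : ℝ) : Mat d := 1 + μ • Nm j k

lemma Nm_apply_eq (j k a b : Fin d) : Nm j k a b =
    (if a = j ∧ b = j then -(1/2 : ℝ)
     else if a = j ∧ b = k then 1/2
     else if a = k ∧ b = j then 1/2
     else if a = k ∧ b = k then -(1/2)
     else 0) := rfl

lemma Nm_row_split {j k : Fin d} (h : j ≠ k) (a b : Fin d) :
    Nm j k a b =
      (if b = j then (if a = j then -(1/2:ℝ) else if a = k then 1/2 else 0) else 0) +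
      (if b = k then (if a = j then (1/2:ℝ) else if a = k then -(1/2) else 0) else 0) := by
  rw [Nm_apply_eq]
  split_ifs <;> simp_all <;> norm_num

lemma Nm_row_sum {j k : Fin d} (h : j ≠ k) (a : Fin d) : ∑ b, Nm j k a b = 0 := by
  rw [Finset.sum_congr rfl fun b _ => Nm_row_split h a b, Finset.sum_add_distrib,
    Finset.sum_ite_eq' univ j, Finset.sum_ite_eq' univ k]
  simp only [mem_univ, if_true]
  split_ifs <;> norm_num

lemma Nm_symm (j k a b : Fin d) : Nm j k a b = Nm j k b a := by
  rw [Nm_apply_eq, Nm_apply_eq]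
  split_ifs <;> simp_all <;> norm_num

lemma Nm_col_sum {j k : Fin d} (h : j ≠ k) (b : Fin d) : ∑ a, Nm j k a b = 0 := by
  rw [Finset.sum_congr rfl fun a _ => Nm_symm j k a b]
  exact Nm_row_sum h b

lemma Nm_diag_off {j k i : Fin d} (hij : i ≠ j) (hik : i ≠ k) : Nm j k i i = 0 := by
  rw [Nm_apply_eq]
  split_ifs <;> simp_all

lemma en_Nm_le (j k : Fin d) : en (Nm j k) ≤ 2 := by
  have hb : ∀ a b : Fin d, |Nm j k a b| ≤
      (if a = j ∧ b = j then (1/2:ℝ) else 0) + (if a = j ∧ b = k then (1/2:ℝ) else 0) +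
      (if a = k ∧ b = j then (1/2:ℝ) else 0) + (if a = k ∧ b = k then (1/2:ℝ) else 0) := by
    intro a b
    rw [Nm_apply_eq]
    split_ifs <;> norm_num [abs_le]
  calc en (Nm j k) ≤ ∑ a : Fin d, ∑ b : Fin d,
      ((if a = j ∧ b = j then (1/2:ℝ) else 0) + (if a = j ∧ b = k then (1/2:ℝ) else 0) +
      (if a = k ∧ b = j then (1/2:ℝ) else 0) + (if a = k ∧ b = k then (1/2:ℝ) else 0)) :=
        Finset.sum_le_sum fun a _ => Finset.sum_le_sum fun b _ => hb a b
    _ ≤ 2 := by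
        simp only [Finset.sum_add_distrib, ite_and]
        simp [Finset.sum_ite_eq', Finset.sum_ite_eq]
        norm_num

lemma Tm_bistochastic {j k : Fin d} (h : j ≠ k) {μ : ℝ} (h0 : 0 ≤ μ) (h1 : μ ≤ 1) :
    Bistochastic (Tm j k μ) := by
  refine ⟨fun a b => ?_, fun a => ?_, fun b => ?_⟩
  · show 0 ≤ (1 : Mat d) a b + μ * Nm j k a b
    rw [Matrix.one_apply, Nm_apply_eq]
    split_ifs <;> simp_all <;> nlinarith
  · show ∑ b, ((1 : Mat d) a b + μ * Nm j k a b) = 1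
    rw [Finset.sum_add_distrib, ← Finset.mul_sum, Nm_row_sum h]
    simp [Matrix.one_apply, Finset.sum_ite_eq]
  · show ∑ a, ((1 : Mat d) a b + μ * Nm j k a b) = 1
    rw [Finset.sum_add_distrib, ← Finset.mul_sum, Nm_col_sum h]
    simp [Matrix.one_apply, Finset.sum_ite_eq']

end RayFact
end C3
section C4
open Finset
namespace RayFact
variable {d : ℕ}

lemma Tm_elementary {j k : Fin d} (h : j ≠ k) {μ : ℝ} (h0 : 0 ≤ μ) (h1 : μ ≤ 1) :
    Elementary (Tm j k μ) := by
  refine ⟨Tm_bistochastic h h0 h1, Finset.univ \ {j, k}, ?_, ?_⟩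
  · rw [Finset.card_sdiff_of_subset (Finset.subset_univ _), Finset.card_univ, Fintype.card_fin,
      Finset.card_pair h]
  · intro i hi
    simp only [Finset.mem_sdiff, Finset.mem_insert, Finset.mem_singleton] at hi
    push_neg at hi
    show (1 : Mat d) i i + μ * Nm j k i i = 1
    rw [Nm_diag_off hi.2.1 hi.2.2, Matrix.one_apply_eq]
    ring

noncomputable def Cmat (d : ℕ) (x : ℝ) : Mat d :=
  (1 - x) • (1 : Mat d) + x • flatMatrix d

lemma Cmat_eq_one_add (x : ℝ) : Cmat d x = 1 + x • (flatMatrix d - 1) := by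
  unfold Cmat; module

lemma flat_mul_flat (hd : 1 ≤ d) : flatMatrix d * flatMatrix d = flatMatrix d := by
  have hd0 : (0:ℝ) < d := by exact_mod_cast hd
  ext a b
  rw [Matrix.mul_apply]
  simp only [flatMatrix, Matrix.of_apply, Finset.sum_const, Finset.card_univ, Fintype.card_fin,
    nsmul_eq_mul]
  field_simp

lemma one_mul_flat : (1 : Mat d) * flatMatrix d = flatMatrix d := one_mul _
lemma flat_mul_one : flatMatrix d * (1 : Mat d) = flatMatrix d := mul_one _

lemma Cmat_mul (hd : 1 ≤ d) (x y : ℝ) :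
    Cmat d x * Cmat d y = Cmat d (x + y - x * y) := by
  unfold Cmat
  simp only [add_mul, mul_add, smul_mul_assoc, Matrix.mul_smul, one_mul, mul_one,
    flat_mul_flat hd, smul_smul]
  match_scalars <;> ring

lemma Cmat_pow (hd : 1 ≤ d) (x : ℝ) (n : ℕ) :
    Cmat d x ^ n = Cmat d (1 - (1 - x) ^ n) := by
  induction n with
  | zero => simp [Cmat]
  | succ n ih =>
      rw [pow_succ, ih, Cmat_mul hd]
      congr 1
      ring

lemma Cmat_bistochastic (hd : 1 ≤ d) {x : ℝ} (h0 : 0 ≤ x) (h1 : x ≤ 1) :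
    Bistochastic (Cmat d x) := by
  have hd0 : (0:ℝ) < d := by exact_mod_cast hd
  refine ⟨fun a b => ?_, fun a => ?_, fun b => ?_⟩
  · show 0 ≤ (1 - x) * (1 : Mat d) a b + x * flatMatrix d a b
    rw [Matrix.one_apply]
    simp only [flatMatrix, Matrix.of_apply]
    have hx : 0 ≤ x * (1/(d:ℝ)) := mul_nonneg h0 (le_of_lt (one_div_pos.mpr hd0))
    split_ifs <;> nlinarith
  · show ∑ b, ((1 - x) * (1 : Mat d) a b + x * flatMatrix d a b) = 1
    simp only [Matrix.one_apply, flatMatrix, Matrix.of_apply, mul_ite, mul_one, mul_zero,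
      Finset.sum_add_distrib, Finset.sum_ite_eq, Finset.mem_univ, if_true,
      Finset.sum_const, Finset.card_univ, Fintype.card_fin, nsmul_eq_mul]
    field_simp
    ring
  · show ∑ a, ((1 - x) * (1 : Mat d) a b + x * flatMatrix d a b) = 1
    simp only [Matrix.one_apply, flatMatrix, Matrix.of_apply, mul_ite, mul_one, mul_zero,
      Finset.sum_add_distrib, Finset.sum_ite_eq', Finset.mem_univ, if_true,
      Finset.sum_const, Finset.card_univ, Fintype.card_fin, nsmul_eq_mul]
    field_simp
    ring

def plist (d : ℕ) : List (Fin d × Fin d) :=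
  ((List.finRange d) ×ˢ (List.finRange d)).filter fun p => decide (p.1 ≠ p.2)

lemma mem_plist {p : Fin d × Fin d} : p ∈ plist d ↔ p.1 ≠ p.2 := by
  obtain ⟨j, k⟩ := p
  simp [plist, List.mem_filter, List.mem_product, List.mem_finRange]

lemma plist_nodup : (plist d).Nodup :=
  ((List.nodup_finRange d).product (List.nodup_finRange d)).filter _

lemma plist_toFinset : (plist d).toFinset = Finset.univ.filter (fun p => p.1 ≠ p.2) := by
  ext p
  simp [List.mem_toFinset, mem_plist]

lemma list_sum_apply (l : List (Mat d)) (a b : Fin d) :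
    l.sum a b = (l.map fun M => M a b).sum := by
  induction l with
  | nil => simp [Matrix.zero_apply]
  | cons X l ih => simp [Matrix.add_apply, ih]

lemma sum_Nm (hd : 1 ≤ d) :
    ((plist d).map fun p => Nm p.1 p.2).sum = (d:ℝ) • (flatMatrix d - 1) := by
  have hd0 : (0:ℝ) < d := by exact_mod_cast hd
  ext a b
  rw [list_sum_apply, List.map_map]
  have hnodup := plist_nodup (d := d)
  rw [← List.sum_toFinset _ hnodup, plist_toFinset, Finset.sum_filter, Fintype.sum_prod_type]
  have rhs : ((d:ℝ) • (flatMatrix d - 1)) a b = (d:ℝ) * (1/d - if a = b then 1 else 0) := by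
    simp [flatMatrix, Matrix.sub_apply, Matrix.one_apply]
  rw [rhs]
  simp only [ne_eq, ite_not, Function.comp]
  by_cases hab : a = b
  · subst hab
    have hpt : ∀ j k : Fin d, (if j = k then (0:ℝ) else Nm j k a a) =
        (if j = a then -(1/2:ℝ) else 0) + (if k = a then -(1/2:ℝ) else 0) +
        (if j = a ∧ k = a then 1 else 0) := by
      intro j k
      by_cases hja : j = a <;> by_cases hka : k = a <;> by_cases hjk : j = k <;>
        (try simp_all [Nm_apply_eq, eq_comm]) <;> (try norm_num)
    simp only [hpt]
    simp only [Finset.sum_add_distrib, ite_and, Finset.sum_ite_eq', Finset.sum_const,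
      Finset.card_univ, Fintype.card_fin, Finset.mem_univ, if_true, nsmul_eq_mul, if_pos rfl]
    field_simp
    simp
    ring
  · have hba : b ≠ a := fun h => hab h.symm
    have hpt : ∀ j k : Fin d, (if j = k then (0:ℝ) else Nm j k a b) =
        (if j = a then (if k = b then (1/2:ℝ) else 0) else 0) +
        (if j = b then (if k = a then (1/2:ℝ) else 0) else 0) := by
      intro j k
      by_cases hja : j = a <;> by_cases hjb : j = b <;> by_cases hka : k = a <;>
        by_cases hkb : k = b <;> by_cases hjk : j = k <;>
        (try simp_all [Nm_apply_eq, eq_comm]) <;> (try norm_num)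
    simp only [hpt]
    simp only [Finset.sum_add_distrib, Finset.sum_ite_eq', Finset.mem_univ, if_true]
    rw [if_neg hab]
    field_simp
    norm_num

end RayFact
end C4
section C5
open Finset
namespace RayFact
variable {d : ℕ}

def Pl (l : List (Mat d)) : Mat d := (l.map (fun X => 1 + X)).prod

lemma pow_aux {a : ℝ} (ha : 0 ≤ a) (m : ℕ) : (1+a)^m ≤ 1 + m * a * (1+a)^m := by
  induction m with
  | zero => norm_num
  | succ m ih =>
      have h1 : (1:ℝ) ≤ (1+a)^m := one_le_pow₀ (by linarith)
      have h2 : (0:ℝ) < (1+a) := by linarith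
      rw [pow_succ]
      push_cast
      have hp : (0:ℝ) ≤ (1+a)^m := pow_nonneg h2.le m
      nlinarith [mul_nonneg (mul_nonneg (mul_nonneg (Nat.cast_nonneg (α := ℝ) m) ha) ha) hp,
        mul_nonneg (mul_nonneg ha ha) hp]

lemma expand_bound (l : List (Mat d)) (a : ℝ) (ha : 0 ≤ a) (h : ∀ X ∈ l, en X ≤ a) :
    en (Pl l - 1) ≤ d * ((1+a)^l.length - 1) ∧
    en (Pl l - 1 - l.sum) ≤ l.length * a * d * ((1+a)^l.length - 1) := by
  induction l with
  | nil => simp [Pl, en]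
  | cons X l ih =>
      obtain ⟨ihe, iht⟩ := ih (fun Y hY => h Y (List.mem_cons_of_mem X hY))
      have hX : en X ≤ a := h X List.mem_cons_self
      have hXnn : 0 ≤ en X := en_nonneg X
      have hPl : en (Pl l) ≤ d + en (Pl l - 1) := by
        have : Pl l = 1 + (Pl l - 1) := by abel
        calc en (Pl l) = en (1 + (Pl l - 1)) := by rw [← this]
          _ ≤ en (1 : Mat d) + en (Pl l - 1) := en_add_le _ _
          _ = d + en (Pl l - 1) := by rw [en_one]
      have hd0 : (0:ℝ) ≤ d := Nat.cast_nonneg d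
      have hpow : (1:ℝ) ≤ (1+a)^l.length := one_le_pow₀ (by linarith)
      have hpow' : (1+a)^l.length ≤ (1+a)^(l.length+1) :=
        pow_le_pow_right₀ (by linarith) (Nat.le_succ _)
      have hcons : Pl (X :: l) = (1 + X) * Pl l := by
        simp [Pl, List.map_cons, List.prod_cons]
      constructor
      · have key : Pl (X :: l) - 1 = (Pl l - 1) + X * Pl l := by
          rw [hcons]; noncomm_ring
        calc en (Pl (X :: l) - 1) ≤ en (Pl l - 1) + en (X * Pl l) := by
              rw [key]; exact en_add_le _ _
          _ ≤ en (Pl l - 1) + en X * en (Pl l) := by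
              have := en_mul_le X (Pl l); linarith [en_nonneg (X * Pl l)]
          _ ≤ d * ((1+a)^l.length - 1) + a * (d + d * ((1+a)^l.length - 1)) := by
              have h1 : en X * en (Pl l) ≤ a * (d + d * ((1+a)^l.length - 1)) := by
                have h2 : en (Pl l) ≤ d + d * ((1+a)^l.length - 1) := by linarith
                have h3 : 0 ≤ en (Pl l) := en_nonneg _
                nlinarith
              linarith
          _ ≤ d * ((1+a)^(X :: l).length - 1) := by
              simp only [List.length_cons]
              rw [pow_succ]
              nlinarith
      · have key : Pl (X :: l) - 1 - (X :: l).sum = (Pl l - 1 - l.sum) + X * (Pl l - 1) := by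
          rw [hcons, List.sum_cons]; noncomm_ring
        calc en (Pl (X :: l) - 1 - (X :: l).sum)
            ≤ en (Pl l - 1 - l.sum) + en (X * (Pl l - 1)) := by
              rw [key]; exact en_add_le _ _
          _ ≤ en (Pl l - 1 - l.sum) + en X * en (Pl l - 1) := by
              have := en_mul_le X (Pl l - 1); linarith [en_nonneg (X * (Pl l - 1))]
          _ ≤ l.length * a * d * ((1+a)^l.length - 1) + a * (d * ((1+a)^l.length - 1)) := by
              have h3 : 0 ≤ en (Pl l - 1) := en_nonneg _
              nlinarith
          _ ≤ (X :: l).length * a * d * ((1+a)^(X :: l).length - 1) := by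
              simp only [List.length_cons]
              push_cast
              have hfac : (0:ℝ) ≤ ((l.length:ℝ)+1)*a*d := by positivity
              have hmul := mul_le_mul_of_nonneg_left (sub_le_sub_right hpow' (1:ℝ)) hfac
              nlinarith [hmul]

noncomputable def Em (d : ℕ) (μ : ℝ) : Mat d :=
  ((plist d).map (fun p => Tm p.1 p.2 μ)).prod

lemma Em_eq_Pl (μ : ℝ) : Em d μ = Pl ((plist d).map (fun p => μ • Nm p.1 p.2)) := by
  unfold Em Pl
  rw [List.map_map]
  rfl

lemma Em_sub_Cmat (hd : 1 ≤ d) {μ : ℝ} (h0 : 0 ≤ μ) :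
    en (Em d μ - Cmat d (d * μ)) ≤
      (plist d).length * (2*μ) * d * ((1 + 2*μ)^(plist d).length - 1) := by
  set l : List (Mat d) := (plist d).map (fun p => μ • Nm p.1 p.2) with hl
  have hlen : l.length = (plist d).length := List.length_map _
  have hsum : l.sum = ((d:ℝ) * μ) • (flatMatrix d - 1) := by
    have hl2 : l = ((plist d).map (fun p => Nm p.1 p.2)).map (fun M => μ • M) := by
      rw [hl, List.map_map]; rfl
    rw [hl2, ← List.smul_sum, sum_Nm hd, smul_smul, mul_comm]
  have hCm : Cmat d (d * μ) = 1 + l.sum := by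
    rw [hsum, Cmat_eq_one_add]
  have hbd : ∀ X ∈ l, en X ≤ 2*μ := by
    intro X hX
    rw [hl] at hX
    obtain ⟨p, hp, rfl⟩ := List.mem_map.mp hX
    rw [en_smul, abs_of_nonneg h0]
    have := en_Nm_le p.1 p.2
    nlinarith
  have h := (expand_bound l (2*μ) (by linarith) hbd).2
  rw [hlen] at h
  have : Em d μ - Cmat d (d * μ) = Pl l - 1 - l.sum := by
    rw [Em_eq_Pl, hCm]; abel
  rw [this]
  exact h

end RayFact
end C5
section C6
open Finset Filter Topology
namespace RayFact
variable {d : ℕ}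

lemma Em_bistochastic {μ : ℝ} (h0 : 0 ≤ μ) (h1 : μ ≤ 1) : Bistochastic (Em d μ) := by
  apply bi_list_prod
  intro M hM
  obtain ⟨p, hp, rfl⟩ := List.mem_map.mp hM
  exact (Tm_bistochastic (mem_plist.mp hp) h0 h1)

lemma Em_pow_mem {μ : ℝ} (h0 : 0 ≤ μ) (h1 : μ ≤ 1) (n : ℕ) :
    Em d μ ^ n ∈ { M : Mat d |
      ∃ L : List (Mat d), (∀ E ∈ L, Elementary E) ∧ M = L.prod } := by
  refine ⟨(List.replicate n ((plist d).map (fun p => Tm p.1 p.2 μ))).flatten, ?_, ?_⟩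
  · intro E hE
    rw [List.mem_flatten] at hE
    obtain ⟨l', hl', hEl'⟩ := hE
    rw [List.eq_of_mem_replicate hl'] at hEl'
    obtain ⟨p, hp, rfl⟩ := List.mem_map.mp hEl'
    exact Tm_elementary (mem_plist.mp hp) h0 h1
  · rw [List.prod_flatten, List.map_replicate, List.prod_replicate]
    rfl

set_option maxHeartbeats 1000000 in
lemma factorisable_lt (hd : 1 ≤ d) {lam : ℝ} (h0 : 0 ≤ lam) (h1 : lam < 1) :
    Cmat d lam ∈ closure { M : Mat d |
      ∃ L : List (Mat d), (∀ E ∈ L, Elementary E) ∧ M = L.prod } := by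
  have hd0 : (0:ℝ) < d := by exact_mod_cast hd
  have hd1 : (1:ℝ) ≤ d := by exact_mod_cast hd
  set r : ℝ := 1 - lam with hrdef
  have hr : 0 < r := by simp [hrdef]; linarith
  have hr1 : r ≤ 1 := by simp [hrdef]; linarith
  set c : ℝ := -Real.log r with hcdef
  have hc0 : 0 ≤ c := by
    simp only [hcdef, neg_nonneg]
    exact Real.log_nonpos hr.le hr1
  set m : ℕ := (plist d).length with hmdef
  set μ : ℕ → ℝ := fun n => (1 - r ^ ((n:ℝ)⁻¹)) / d with hμdef
  set K : ℝ := 4 * d * m^2 * 3^m * c^2 with hKdef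
  -- basic facts for n ≥ 1
  have hfacts : ∀ n : ℕ, 1 ≤ n →
      0 ≤ μ n ∧ μ n ≤ 1 ∧ (d:ℝ) * μ n ≤ 1 ∧ μ n ≤ c * (n:ℝ)⁻¹ ∧
        Cmat d ((d:ℝ) * μ n) ^ n = Cmat d lam := by
    intro n hn
    have hn0 : (0:ℝ) < n := by exact_mod_cast hn
    have hrn_pos : 0 < r ^ ((n:ℝ)⁻¹) := Real.rpow_pos_of_pos hr _
    have hrn_le1 : r ^ ((n:ℝ)⁻¹) ≤ 1 := Real.rpow_le_one hr.le hr1 (by positivity)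
    have hμ0 : 0 ≤ μ n := by
      simp only [hμdef]
      apply div_nonneg (by linarith) hd0.le
    have hdμ : (d:ℝ) * μ n = 1 - r ^ ((n:ℝ)⁻¹) := by
      simp only [hμdef]
      field_simp
    have hdμ1 : (d:ℝ) * μ n ≤ 1 := by rw [hdμ]; linarith
    have hμ1 : μ n ≤ 1 := by nlinarith
    have hrnn : (r ^ ((n:ℝ)⁻¹)) ^ n = r := by
      rw [← Real.rpow_natCast (r ^ ((n:ℝ)⁻¹)) n, ← Real.rpow_mul hr.le,
        inv_mul_cancel₀ (by positivity : (n:ℝ) ≠ 0), Real.rpow_one]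
    have hCpow : Cmat d ((d:ℝ) * μ n) ^ n = Cmat d lam := by
      rw [Cmat_pow hd]
      congr 1
      rw [hdμ]
      have : (1:ℝ) - (1 - r ^ ((n:ℝ)⁻¹)) = r ^ ((n:ℝ)⁻¹) := by ring
      rw [this, hrnn, hrdef]
      ring
    have hμc : μ n ≤ c * (n:ℝ)⁻¹ := by
      have hexp : Real.log r * (n:ℝ)⁻¹ + 1 ≤ r ^ ((n:ℝ)⁻¹) := by
        rw [Real.rpow_def_of_pos hr]
        exact Real.add_one_le_exp _
      have h2 : 1 - r ^ ((n:ℝ)⁻¹) ≤ c * (n:ℝ)⁻¹ := by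
        simp only [hcdef]
        nlinarith
      calc μ n = (1 - r ^ ((n:ℝ)⁻¹)) / d := rfl
        _ ≤ (c * (n:ℝ)⁻¹) / d := by gcongr
        _ ≤ c * (n:ℝ)⁻¹ := by
            apply div_le_self (by positivity) hd1
    exact ⟨hμ0, hμ1, hdμ1, hμc, hCpow⟩
  -- the quantitative bound
  have hbound : ∀ n : ℕ, 1 ≤ n → en (Em d (μ n) ^ n - Cmat d lam) ≤ K * (n:ℝ)⁻¹ := by
    intro n hn
    obtain ⟨hμ0, hμ1, hdμ1, hμc, hCpow⟩ := hfacts n hn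
    have hn0 : (0:ℝ) < n := by exact_mod_cast hn
    have hdμ0 : 0 ≤ (d:ℝ) * μ n := by positivity
    have hbiE : Bistochastic (Em d (μ n)) := Em_bistochastic hμ0 hμ1
    have hbiC : Bistochastic (Cmat d ((d:ℝ) * μ n)) := Cmat_bistochastic hd hdμ0 hdμ1
    have s1 : en (Em d (μ n) ^ n - Cmat d lam) ≤
        n * en (Em d (μ n) - Cmat d ((d:ℝ) * μ n)) := by
      rw [← hCpow]
      exact en_pow_sub_pow hbiE hbiC n
    have s2 := Em_sub_Cmat hd hμ0 (d := d)
    rw [← hmdef] at s2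
    have hpm : (0:ℝ) ≤ (m:ℝ) := Nat.cast_nonneg m
    have h2μ0 : (0:ℝ) ≤ 2 * μ n := by linarith
    have p1 := pow_aux h2μ0 m
    have p2 : (1 + 2*μ n)^m ≤ (3:ℝ)^m := by
      apply pow_le_pow_left₀ (by linarith) (by linarith)
    have h3m0 : (0:ℝ) ≤ (3:ℝ)^m := by positivity
    have s3 : (1 + 2*μ n)^m - 1 ≤ (m:ℝ) * (2*μ n) * 3^m := by
      have hfac : (0:ℝ) ≤ (m:ℝ) * (2*μ n) := by positivity
      have := mul_le_mul_of_nonneg_left p2 hfac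
      linarith
    have s4 : en (Em d (μ n) - Cmat d ((d:ℝ) * μ n)) ≤
        (m:ℝ) * (2*μ n) * d * ((m:ℝ) * (2*μ n) * 3^m) := by
      have hfac : (0:ℝ) ≤ (m:ℝ) * (2*μ n) * d := by positivity
      exact s2.trans (mul_le_mul_of_nonneg_left s3 hfac)
    have s5 : (n:ℝ) * (μ n)^2 ≤ c^2 * (n:ℝ)⁻¹ := by
      have h1 : (μ n)^2 ≤ (c * (n:ℝ)⁻¹)^2 := pow_le_pow_left₀ hμ0 hμc 2
      have h2 : (n:ℝ) * (c * (n:ℝ)⁻¹)^2 = c^2 * (n:ℝ)⁻¹ := by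
        field_simp
      calc (n:ℝ) * (μ n)^2 ≤ (n:ℝ) * (c * (n:ℝ)⁻¹)^2 := mul_le_mul_of_nonneg_left h1 hn0.le
        _ = c^2 * (n:ℝ)⁻¹ := h2
    calc en (Em d (μ n) ^ n - Cmat d lam)
        ≤ n * en (Em d (μ n) - Cmat d ((d:ℝ) * μ n)) := s1
      _ ≤ n * ((m:ℝ) * (2*μ n) * d * ((m:ℝ) * (2*μ n) * 3^m)) := by
          apply mul_le_mul_of_nonneg_left s4 hn0.le
      _ = (4 * d * m^2 * 3^m) * ((n:ℝ) * (μ n)^2) := by ring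
      _ ≤ (4 * d * m^2 * 3^m) * (c^2 * (n:ℝ)⁻¹) := by
          apply mul_le_mul_of_nonneg_left s5 (by positivity)
      _ = K * (n:ℝ)⁻¹ := by rw [hKdef]; ring
  -- convergence
  have hconv : Tendsto (fun n : ℕ => Em d (μ n) ^ n) atTop (𝓝 (Cmat d lam)) := by
    apply tendsto_pi_nhds.mpr
    intro a
    apply tendsto_pi_nhds.mpr
    intro b
    rw [← tendsto_sub_nhds_zero_iff]
    refine squeeze_zero_norm' (a := fun n : ℕ => K * (n:ℝ)⁻¹) ?_ ?_
    · filter_upwards [eventually_ge_atTop 1] with n hn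
      have h1 : |(Em d (μ n) ^ n - Cmat d lam) a b| ≤ en (Em d (μ n) ^ n - Cmat d lam) :=
        abs_entry_le_en _ a b
      have h2 := hbound n hn
      have h3 : (Em d (μ n) ^ n) a b - Cmat d lam a b = (Em d (μ n) ^ n - Cmat d lam) a b := rfl
      rw [Real.norm_eq_abs, h3]
      linarith
    · have := tendsto_inv_atTop_nhds_zero_nat.const_mul K
      simpa using this
  refine mem_closure_of_tendsto hconv ?_
  filter_upwards [eventually_ge_atTop 1] with n hn
  obtain ⟨hμ0, hμ1, _, _, _⟩ := hfacts n hn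
  exact Em_pow_mem hμ0 hμ1 n

lemma Cmat_continuous : Continuous (fun x : ℝ => Cmat d x) := by
  apply continuous_pi
  intro a
  apply continuous_pi
  intro b
  show Continuous fun x : ℝ => (1 - x) * (1 : Mat d) a b + x * flatMatrix d a b
  fun_prop

theorem main {d : ℕ} (hd : 1 ≤ d)
    (lam : ℝ) (hlam : lam ∈ Set.Icc (0 : ℝ) 1) :
    Factorisable ((1 - lam) • (1 : Matrix (Fin d) (Fin d) ℝ) + lam • flatMatrix d) ∧
    Bistochastic ((1 - lam) • (1 : Matrix (Fin d) (Fin d) ℝ) + lam • flatMatrix d) := by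
  obtain ⟨h0, h1⟩ := hlam
  constructor
  · show Cmat d lam ∈ closure _
    rcases lt_or_eq_of_le h1 with hlt | heq
    · exact factorisable_lt hd h0 hlt
    · subst heq
      have hmem : ∀ n : ℕ, Cmat d (1 - ((n:ℝ)+1)⁻¹) ∈ closure { M : Mat d |
          ∃ L : List (Mat d), (∀ E ∈ L, Elementary E) ∧ M = L.prod } := by
        intro n
        have hp : (0:ℝ) < ((n:ℝ)+1)⁻¹ := by positivity
        have hp1 : ((n:ℝ)+1)⁻¹ ≤ 1 := by
          rw [inv_le_one_iff₀]
          right; linarith [Nat.cast_nonneg (α := ℝ) n]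
        exact factorisable_lt hd (by linarith) (by linarith)
      have htend : Tendsto (fun n : ℕ => Cmat d (1 - ((n:ℝ)+1)⁻¹)) atTop (𝓝 (Cmat d 1)) := by
        apply (Cmat_continuous (d := d)).continuousAt.tendsto.comp
        have : Tendsto (fun n : ℕ => ((n:ℝ)+1)⁻¹) atTop (𝓝 0) := tendsto_one_div_add_atTop_nhds_zero_nat.congr (by intro n; rw [one_div])
        have h2 := (tendsto_const_nhds (x := (1:ℝ)) (f := atTop (α := ℕ))).sub this
        simpa using h2
      exact isClosed_closure.mem_of_tendsto htend (Eventually.of_forall hmem)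
  · exact Cmat_bistochastic hd h0 h1

end RayFact
end C6

/-- For every `d ≥ 1` and `λ ∈ [0,1]`, the matrix `C_d(λ) = (1-λ) I_d + λ W_d` on the ray
connecting the identity with the flat matrix is a factorisable bistochastic matrix. -/
theorem ray_identity_flat_factorisable {d : ℕ} (hd : 1 ≤ d)
    (lam : ℝ) (hlam : lam ∈ Set.Icc (0 : ℝ) 1) :
    Factorisable ((1 - lam) • (1 : Matrix (Fin d) (Fin d) ℝ) + lam • flatMatrix d) ∧
    Bistochastic ((1 - lam) • (1 : Matrix (Fin d) (Fin d) ℝ) + lam • flatMatrix d) :=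
  RayFact.main hd lam hlam
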